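/- arXiv:1510.07055 — 2 statements merged into one kernel-verified Lean document; each statement's English description precedes it below -/
import Mathlib

section
/- Let k ≥ 1 be an integer. For each j ∈ {1,…,k} let M_{1,j}, M_{2,j} be positive real numbers satisfying the constraint M_{1,j} + M_{2,j} = (M_{1,j}·M_{2,j})/(4π), and let m_{1,j}, m_{2,j} be real numbers with m_{i,j} ≥ M_{i,j} for i = 1,2 and with Σ_{j=1}^{k} m_{1,j} = 8kπ and Σ_{j=1}^{k} m_{2,j} = 8kπ. Then M_{i,j} = m_{i,j} = 8π for all i ∈ {1,2} and all j ∈ {1,…,k}. -/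
/-- Arithmetic core of the lemma that all local masses equal `8π`: if for each
`j` the limiting masses `M i j > 0` satisfy the Pohozaev constraint
`M₀ⱼ + M₁ⱼ = M₀ⱼ·M₁ⱼ/(4π)`, the local masses dominate (`m i j ≥ M i j`), and
`Σⱼ m i j = 8kπ` for `i = 1, 2`, then `M i j = m i j = 8π` for all `i, j`. -/
theorem all_masses_eq_eight_pi (k : ℕ) (hk : 1 ≤ k)
    (M m : Fin 2 → Fin k → ℝ)
    (hMpos : ∀ i j, 0 < M i j)
    (hconstraint : ∀ j, M 0 j + M 1 j = M 0 j * M 1 j / (4 * Real.pi))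
    (hdom : ∀ i j, M i j ≤ m i j)
    (hsum : ∀ i, ∑ j : Fin k, m i j = 8 * k * Real.pi) :
    ∀ i j, M i j = 8 * Real.pi ∧ m i j = 8 * Real.pi := by
  have hπ := Real.pi_pos
  have hprod : ∀ j, 4 * Real.pi * (M 0 j + M 1 j) = M 0 j * M 1 j := by
    intro j
    have h := hconstraint j
    field_simp at h
    linarith
  have key : ∀ j, 16 * Real.pi ≤ M 0 j + M 1 j := by
    intro j
    have ha := hMpos 0 j
    have hb := hMpos 1 j
    have h := hprod j
    nlinarith [sq_nonneg (M 0 j - M 1 j), mul_pos ha hb, sq_nonneg (M 0 j + M 1 j)]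
  -- total sum of the nonnegative slacks is zero
  have hslack : ∀ j ∈ Finset.univ, (0:ℝ) ≤ (m 0 j - M 0 j) + (m 1 j - M 1 j) + (M 0 j + M 1 j - 16 * Real.pi) := by
    intro j _
    have h0 := hdom 0 j
    have h1 := hdom 1 j
    have h2 := key j
    linarith
  have hsumzero : ∑ j : Fin k, ((m 0 j - M 0 j) + (m 1 j - M 1 j) + (M 0 j + M 1 j - 16 * Real.pi)) = 0 := by
    have e : ∑ j : Fin k, ((m 0 j - M 0 j) + (m 1 j - M 1 j) + (M 0 j + M 1 j - 16 * Real.pi))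
        = (∑ j : Fin k, m 0 j) + (∑ j : Fin k, m 1 j) - ∑ j : Fin k, (16 * Real.pi) := by
      rw [← Finset.sum_add_distrib, ← Finset.sum_sub_distrib]
      apply Finset.sum_congr rfl
      intro j _
      ring
    rw [e, hsum 0, hsum 1, Finset.sum_const, Finset.card_univ, Fintype.card_fin,
      nsmul_eq_mul]
    ring
  have heach : ∀ j, (m 0 j - M 0 j) + (m 1 j - M 1 j) + (M 0 j + M 1 j - 16 * Real.pi) = 0 := by
    intro j
    have := (Finset.sum_eq_zero_iff_of_nonneg hslack).mp hsumzero j (Finset.mem_univ j)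
    exact this
  have hM8 : ∀ j, M 0 j = 8 * Real.pi ∧ M 1 j = 8 * Real.pi := by
    intro j
    have h0 := hdom 0 j
    have h1 := hdom 1 j
    have h2 := key j
    have he := heach j
    have hs : M 0 j + M 1 j = 16 * Real.pi := by linarith
    have hp := hprod j
    have hsq : (M 0 j - M 1 j) ^ 2 = 0 := by nlinarith
    have hd : M 0 j = M 1 j := by nlinarith [sq_nonneg (M 0 j - M 1 j)]
    constructor <;> linarith
  intro i j
  obtain ⟨h0, h1⟩ := hM8 j
  have h0' := hdom 0 j
  have h1' := hdom 1 j
  have h2 := key j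
  have he := heach j
  fin_cases i
  · exact ⟨h0, show m 0 j = 8 * Real.pi by linarith⟩
  · exact ⟨h1, show m 1 j = 8 * Real.pi by linarith⟩
end

section
/- Let k ≥ 1 be an integer and C₀ > 4π a real number. For each j ∈ {1,…,k} let M_{1,j}, M_{2,j} be positive real numbers satisfying M_{1,j} + M_{2,j} = (M_{1,j}·M_{2,j})/(4π) and M_{i,j} ≤ C₀ for i = 1,2. Set E = Σ_{i=1}^{2} Σ_{j=1}^{k} (M_{i,j} − 8π). Then E = (1/2)·Σ_{i=1}^{2} Σ_{j=1}^{k} (M_{i,j} − 8π)²/(M_{i,j} − 4π), in particular E ≥ 0, and for every pair (i₀, j₀), (M_{i₀,j₀} − 8π)² ≤ 2(C₀ − 4π)·E. -/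
/-- Quantitative mass comparison: if each pair `(M 0 j, M 1 j)` of positive
reals satisfies the Pohozaev constraint `M₀ⱼ + M₁ⱼ = M₀ⱼ·M₁ⱼ/(4π)` and
`M i j ≤ C₀` with `C₀ > 4π`, then the total excess mass
`E = Σᵢ Σⱼ (M i j − 8π)` satisfies
`E = ½ Σᵢ Σⱼ (M i j − 8π)²/(M i j − 4π)`, in particular `E ≥ 0`, and each
`(M i₀ j₀ − 8π)² ≤ 2(C₀ − 4π)·E`. -/
theorem mass_excess_identity (k : ℕ) (hk : 1 ≤ k) (C₀ : ℝ)
    (hC₀ : 4 * Real.pi < C₀)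
    (M : Fin 2 → Fin k → ℝ)
    (hMpos : ∀ i j, 0 < M i j)
    (hconstraint : ∀ j, M 0 j + M 1 j = M 0 j * M 1 j / (4 * Real.pi))
    (hupper : ∀ i j, M i j ≤ C₀) :
    (∑ i : Fin 2, ∑ j : Fin k, (M i j - 8 * Real.pi))
        = (1 / 2) * ∑ i : Fin 2, ∑ j : Fin k,
            (M i j - 8 * Real.pi) ^ 2 / (M i j - 4 * Real.pi) ∧
    0 ≤ ∑ i : Fin 2, ∑ j : Fin k, (M i j - 8 * Real.pi) ∧
    ∀ i₀ j₀, (M i₀ j₀ - 8 * Real.pi) ^ 2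
        ≤ 2 * (C₀ - 4 * Real.pi) *
            ∑ i : Fin 2, ∑ j : Fin k, (M i j - 8 * Real.pi) := by
  have hπ : 0 < Real.pi := Real.pi_pos
  have h4π : (0:ℝ) < 4 * Real.pi := by linarith
  -- each mass exceeds 4π
  have hgt : ∀ i j, 4 * Real.pi < M i j := by
    intro i j
    have hc := hconstraint j
    have hc' : (M 0 j + M 1 j) * (4 * Real.pi) = M 0 j * M 1 j := by
      field_simp at hc; linarith
    have h0 := hMpos 0 j
    have h1 := hMpos 1 j
    have hg0 : 4 * Real.pi < M 0 j := by nlinarith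
    have hg1 : 4 * Real.pi < M 1 j := by nlinarith
    fin_cases i
    · exact hg0
    · exact hg1
  -- per-pair identity
  have key : ∀ j, (M 0 j - 8 * Real.pi) + (M 1 j - 8 * Real.pi)
      = (1/2) * ((M 0 j - 8 * Real.pi)^2 / (M 0 j - 4 * Real.pi)
        + (M 1 j - 8 * Real.pi)^2 / (M 1 j - 4 * Real.pi)) := by
    intro j
    have hc := hconstraint j
    have hc' : (M 0 j + M 1 j) * (4 * Real.pi) = M 0 j * M 1 j := by
      field_simp at hc; linarith
    have h0 : M 0 j - 4 * Real.pi ≠ 0 := by have := hgt 0 j; linarith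
    have h1 : M 1 j - 4 * Real.pi ≠ 0 := by have := hgt 1 j; linarith
    rw [div_add_div _ _ h0 h1, mul_div_assoc', eq_div_iff (mul_ne_zero h0 h1)]
    linear_combination (-(M 0 j + M 1 j - 8 * Real.pi) / 2) * hc'
  -- rewrite double sums
  have hsum : (∑ i : Fin 2, ∑ j : Fin k, (M i j - 8 * Real.pi))
      = (1 / 2) * ∑ i : Fin 2, ∑ j : Fin k,
          (M i j - 8 * Real.pi) ^ 2 / (M i j - 4 * Real.pi) := by
    rw [Fin.sum_univ_two, Fin.sum_univ_two, ← Finset.sum_add_distrib,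
      ← Finset.sum_add_distrib, Finset.mul_sum]
    exact Finset.sum_congr rfl fun j _ => key j
  have hterm_nonneg : ∀ i j, 0 ≤ (M i j - 8 * Real.pi) ^ 2 / (M i j - 4 * Real.pi) := by
    intro i j
    exact div_nonneg (sq_nonneg _) (by have := hgt i j; linarith)
  have hE : 0 ≤ ∑ i : Fin 2, ∑ j : Fin k, (M i j - 8 * Real.pi) := by
    rw [hsum]
    have : 0 ≤ ∑ i : Fin 2, ∑ j : Fin k,
        (M i j - 8 * Real.pi) ^ 2 / (M i j - 4 * Real.pi) :=
      Finset.sum_nonneg fun i _ => Finset.sum_nonneg fun j _ => hterm_nonneg i j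
    linarith
  refine ⟨hsum, hE, ?_⟩
  intro i₀ j₀
  have hle : (M i₀ j₀ - 8 * Real.pi) ^ 2 / (M i₀ j₀ - 4 * Real.pi)
      ≤ ∑ i : Fin 2, ∑ j : Fin k, (M i j - 8 * Real.pi) ^ 2 / (M i j - 4 * Real.pi) := by
    calc (M i₀ j₀ - 8 * Real.pi) ^ 2 / (M i₀ j₀ - 4 * Real.pi)
        ≤ ∑ j : Fin k, (M i₀ j - 8 * Real.pi) ^ 2 / (M i₀ j - 4 * Real.pi) :=
          Finset.single_le_sum (fun j _ => hterm_nonneg i₀ j) (Finset.mem_univ j₀)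
      _ ≤ _ := Finset.single_le_sum
          (fun i _ => Finset.sum_nonneg fun j _ => hterm_nonneg i j) (Finset.mem_univ i₀)
  have hd : 0 < M i₀ j₀ - 4 * Real.pi := by have := hgt i₀ j₀; linarith
  have h1 : (M i₀ j₀ - 8 * Real.pi) ^ 2
      = ((M i₀ j₀ - 8 * Real.pi) ^ 2 / (M i₀ j₀ - 4 * Real.pi)) * (M i₀ j₀ - 4 * Real.pi) := by
    exact (div_mul_cancel₀ _ hd.ne').symm
  rw [h1, hsum]
  have hC : M i₀ j₀ - 4 * Real.pi ≤ C₀ - 4 * Real.pi := by have := hupper i₀ j₀; linarith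
  have hq := hterm_nonneg i₀ j₀
  calc ((M i₀ j₀ - 8 * Real.pi) ^ 2 / (M i₀ j₀ - 4 * Real.pi)) * (M i₀ j₀ - 4 * Real.pi)
      ≤ (∑ i : Fin 2, ∑ j : Fin k, (M i j - 8 * Real.pi) ^ 2 / (M i j - 4 * Real.pi))
        * (C₀ - 4 * Real.pi) := by
        apply mul_le_mul hle hC (le_of_lt hd)
        exact le_trans hq hle
    _ = 2 * (C₀ - 4 * Real.pi) * ((1/2) * ∑ i : Fin 2, ∑ j : Fin k,
          (M i j - 8 * Real.pi) ^ 2 / (M i j - 4 * Real.pi)) := by ring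
end
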